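/- Let A be an N×N Hermitian positive definite complex matrix and B_1, …, B_n be N×N Hermitian positive semidefinite complex matrices, and for x ∈ ℝⁿ with x_i ≥ 0 for all i let Σ(x) = (A + Σ_{i=1}^n x_i B_i)⁻¹. Then the A-optimal metric f_A(x) = tr(Σ(x)) (real-valued since Σ(x) is Hermitian) is convex on the nonnegative orthant {x ∈ ℝⁿ | x_i ≥ 0 for all i}. -/

import Mathlib

open Matrix ComplexOrder

namespace TraceConvexAux

variable {N : ℕ}

lemma smul_eq_complex_smul (c : ℝ) (M : Matrix (Fin N) (Fin N) ℂ) :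
    c • M = (c : ℂ) • M := by
  ext i j
  simp [Matrix.smul_apply, Complex.real_smul]

lemma posSemidef_smul {B : Matrix (Fin N) (Fin N) ℂ} (hB : B.PosSemidef)
    {c : ℝ} (hc : 0 ≤ c) : ((c : ℂ) • B).PosSemidef := by
  refine posSemidef_iff_dotProduct_mulVec.mpr ⟨?_, fun x => ?_⟩
  · unfold Matrix.IsHermitian
    rw [conjTranspose_smul, hB.1.eq]
    simp [Complex.conj_ofReal]
  · rw [Matrix.smul_mulVec, dotProduct_smul, smul_eq_mul]
    exact mul_nonneg (by exact_mod_cast hc) (hB.dotProduct_mulVec_nonneg x)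

lemma posDef_smul {M : Matrix (Fin N) (Fin N) ℂ} (hM : M.PosDef)
    {c : ℝ} (hc : 0 < c) : ((c : ℂ) • M).PosDef := by
  refine posDef_iff_dotProduct_mulVec.mpr ⟨?_, fun x hx => ?_⟩
  · unfold Matrix.IsHermitian
    rw [conjTranspose_smul, hM.1.eq]
    simp [Complex.conj_ofReal]
  · rw [Matrix.smul_mulVec, dotProduct_smul, smul_eq_mul]
    exact mul_pos (by exact_mod_cast hc) (hM.dotProduct_mulVec_pos hx)

/-- Key inequality: `2 Re⟨u,v⟩ ≤ uᴴ P u + vᴴ P⁻¹ v` for `P` positive definite. -/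
lemma key {P : Matrix (Fin N) (Fin N) ℂ} (hP : P.PosDef) (u v : Fin N → ℂ) :
    star u ⬝ᵥ v + star v ⬝ᵥ u ≤ star u ⬝ᵥ (P *ᵥ u) + star v ⬝ᵥ (P⁻¹ *ᵥ v) := by
  have hdet : IsUnit P.det := (isUnit_iff_isUnit_det _).1 hP.isUnit
  have hPP : P * P⁻¹ = 1 := mul_nonsing_inv _ hdet
  have hPP' : P⁻¹ * P = 1 := nonsing_inv_mul _ hdet
  have hHi : P⁻¹ᴴ = P⁻¹ := hP.isHermitian.inv.eq
  set q := P⁻¹ *ᵥ v with hq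
  have h0 : 0 ≤ star (u - q) ⬝ᵥ (P *ᵥ (u - q)) := hP.posSemidef.dotProduct_mulVec_nonneg _
  have e1 : P *ᵥ q = v := by rw [hq, mulVec_mulVec, hPP, one_mulVec]
  have e2 : ∀ w, star q ⬝ᵥ (P *ᵥ w) = star v ⬝ᵥ w := by
    intro w
    rw [hq, star_mulVec, hHi, ← dotProduct_mulVec, mulVec_mulVec, hPP', one_mulVec]
  have e3 : star q ⬝ᵥ v = star v ⬝ᵥ q := by
    rw [hq, star_mulVec, hHi, ← dotProduct_mulVec]
  have expand : star (u - q) ⬝ᵥ (P *ᵥ (u - q))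
      = star u ⬝ᵥ (P *ᵥ u) - star u ⬝ᵥ v - star v ⬝ᵥ u + star v ⬝ᵥ q := by
    rw [star_sub, sub_dotProduct, mulVec_sub, dotProduct_sub, dotProduct_sub, e1, e2, e3]
    ring
  rw [← sub_nonneg]
  calc (0:ℂ) ≤ star (u - q) ⬝ᵥ (P *ᵥ (u - q)) := h0
    _ = star u ⬝ᵥ (P *ᵥ u) + star v ⬝ᵥ q - (star u ⬝ᵥ v + star v ⬝ᵥ u) := by
        rw [expand]; ring

lemma diag_eq (j : Fin N) (C : Matrix (Fin N) (Fin N) ℂ) :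
    star (Pi.single j 1 : Fin N → ℂ) ⬝ᵥ (C *ᵥ Pi.single j 1) = C j j := by
  have hs : star (Pi.single j 1 : Fin N → ℂ) = Pi.single j 1 := by
    ext i
    simp [Pi.single_apply, apply_ite]
  rw [hs, single_dotProduct, one_mul]
  simp [mulVec_single]

lemma main_ineq {M₁ M₂ : Matrix (Fin N) (Fin N) ℂ} (h₁ : M₁.PosDef) (h₂ : M₂.PosDef)
    {a b : ℝ} (ha : 0 < a) (hb : 0 < b) (hab : a + b = 1) :
    ((((a:ℂ) • M₁ + (b:ℂ) • M₂)⁻¹).trace).re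
      ≤ a * ((M₁⁻¹).trace).re + b * ((M₂⁻¹).trace).re := by
  set S := (a:ℂ) • M₁ + (b:ℂ) • M₂ with hSdef
  have hS : S.PosDef := (posDef_smul h₁ ha).add (posDef_smul h₂ hb)
  have hSS : S * S⁻¹ = 1 := mul_nonsing_inv _ ((isUnit_iff_isUnit_det _).1 hS.isUnit)
  have diag : ∀ j, S⁻¹ j j ≤ (a:ℂ) * (M₁⁻¹ j j) + (b:ℂ) * (M₂⁻¹ j j) := by
    intro j
    set v : Fin N → ℂ := Pi.single j 1 with hv
    set u := S⁻¹ *ᵥ v with hu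
    have h1 := key h₁ u v
    have h2 := key h₂ u v
    have hSu : S *ᵥ u = v := by rw [hu, mulVec_mulVec, hSS, one_mulVec]
    have h1' := mul_le_mul_of_nonneg_left h1 (show (0:ℂ) ≤ (a:ℂ) by exact_mod_cast ha.le)
    have h2' := mul_le_mul_of_nonneg_left h2 (show (0:ℂ) ≤ (b:ℂ) by exact_mod_cast hb.le)
    have hsum := add_le_add h1' h2'
    have hcoef : (a:ℂ) + (b:ℂ) = 1 := by exact_mod_cast hab
    have hc : (a:ℂ) * (star u ⬝ᵥ (M₁ *ᵥ u)) + (b:ℂ) * (star u ⬝ᵥ (M₂ *ᵥ u))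
        = star u ⬝ᵥ v := by
      rw [← hSu, hSdef]
      simp [add_mulVec, Matrix.smul_mulVec, dotProduct_add, dotProduct_smul,
        smul_eq_mul]
    have hL : (a:ℂ) * (star u ⬝ᵥ v + star v ⬝ᵥ u) + (b:ℂ) * (star u ⬝ᵥ v + star v ⬝ᵥ u)
        = star u ⬝ᵥ v + star v ⬝ᵥ u := by
      rw [← add_mul, hcoef, one_mul]
    have key2 : star v ⬝ᵥ u
        ≤ (a:ℂ) * (star v ⬝ᵥ (M₁⁻¹ *ᵥ v)) + (b:ℂ) * (star v ⬝ᵥ (M₂⁻¹ *ᵥ v)) := by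
      have : star u ⬝ᵥ v + star v ⬝ᵥ u
          ≤ star u ⬝ᵥ v
            + ((a:ℂ) * (star v ⬝ᵥ (M₁⁻¹ *ᵥ v)) + (b:ℂ) * (star v ⬝ᵥ (M₂⁻¹ *ᵥ v))) := by
        calc star u ⬝ᵥ v + star v ⬝ᵥ u
            = (a:ℂ) * (star u ⬝ᵥ v + star v ⬝ᵥ u)
              + (b:ℂ) * (star u ⬝ᵥ v + star v ⬝ᵥ u) := hL.symm
          _ ≤ (a:ℂ) * (star u ⬝ᵥ (M₁ *ᵥ u) + star v ⬝ᵥ (M₁⁻¹ *ᵥ v))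
              + (b:ℂ) * (star u ⬝ᵥ (M₂ *ᵥ u) + star v ⬝ᵥ (M₂⁻¹ *ᵥ v)) := hsum
          _ = ((a:ℂ) * (star u ⬝ᵥ (M₁ *ᵥ u)) + (b:ℂ) * (star u ⬝ᵥ (M₂ *ᵥ u)))
              + ((a:ℂ) * (star v ⬝ᵥ (M₁⁻¹ *ᵥ v)) + (b:ℂ) * (star v ⬝ᵥ (M₂⁻¹ *ᵥ v))) := by
                ring
          _ = star u ⬝ᵥ v
              + ((a:ℂ) * (star v ⬝ᵥ (M₁⁻¹ *ᵥ v)) + (b:ℂ) * (star v ⬝ᵥ (M₂⁻¹ *ᵥ v))) := by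
                rw [hc]
      exact le_of_add_le_add_left this
    have hvu : star v ⬝ᵥ u = S⁻¹ j j := by rw [hu, hv, diag_eq]
    have hv1 : star v ⬝ᵥ (M₁⁻¹ *ᵥ v) = M₁⁻¹ j j := by rw [hv, diag_eq]
    have hv2 : star v ⬝ᵥ (M₂⁻¹ *ᵥ v) = M₂⁻¹ j j := by rw [hv, diag_eq]
    rwa [hvu, hv1, hv2] at key2
  have hre : ∀ j, (S⁻¹ j j).re ≤ a * (M₁⁻¹ j j).re + b * (M₂⁻¹ j j).re := by
    intro j
    have h := (Complex.le_def.1 (diag j)).1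
    simpa [Complex.add_re, Complex.mul_re] using h
  calc ((S⁻¹).trace).re = ∑ j, (S⁻¹ j j).re := by
        rw [Matrix.trace, Complex.re_sum]; rfl
    _ ≤ ∑ j, (a * (M₁⁻¹ j j).re + b * (M₂⁻¹ j j).re) := Finset.sum_le_sum fun j _ => hre j
    _ = a * ((M₁⁻¹).trace).re + b * ((M₂⁻¹).trace).re := by
        rw [Finset.sum_add_distrib, ← Finset.mul_sum, ← Finset.mul_sum,
          Matrix.trace, Matrix.trace, Complex.re_sum, Complex.re_sum]
        rfl

end TraceConvexAux

open TraceConvexAux in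
open Matrix ComplexOrder in
/-- The A-optimal metric `x ↦ tr((A + ∑ i, x i • B i)⁻¹)` is convex on the
nonnegative orthant. -/
theorem trace_convex (N n : ℕ)
    (A : Matrix (Fin N) (Fin N) ℂ) (hA : A.PosDef)
    (B : Fin n → Matrix (Fin N) (Fin N) ℂ) (hB : ∀ i, (B i).PosSemidef) :
    ConvexOn ℝ {x : Fin n → ℝ | ∀ i, 0 ≤ x i}
      (fun x : Fin n → ℝ => (((A + ∑ i, x i • B i)⁻¹).trace).re) := by
  have hpos : ∀ x : Fin n → ℝ, (∀ i, 0 ≤ x i) → (A + ∑ i, x i • B i).PosDef := by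
    intro x hx
    refine hA.add_posSemidef ?_
    have : ∀ i ∈ Finset.univ, (x i • B i : Matrix (Fin N) (Fin N) ℂ).PosSemidef := by
      intro i _
      rw [smul_eq_complex_smul]
      exact posSemidef_smul (hB i) (hx i)
    exact Finset.sum_induction _ _ (fun _ _ => Matrix.PosSemidef.add) Matrix.PosSemidef.zero this
  constructor
  · intro x hx y hy a b ha hb hab i
    simpa using add_nonneg (mul_nonneg ha (hx i)) (mul_nonneg hb (hy i))
  · intro x hx y hy a b ha hb hab
    rcases ha.eq_or_lt with rfl | ha'
    · have hb1 : b = 1 := by linarith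
      subst hb1
      simp
    rcases hb.eq_or_lt with rfl | hb'
    · have ha1 : a = 1 := by linarith
      subst ha1
      simp
    have haff : A + ∑ i, (a • x + b • y) i • B i
        = (a:ℂ) • (A + ∑ i, x i • B i) + (b:ℂ) • (A + ∑ i, y i • B i) := by
      rw [← smul_eq_complex_smul, ← smul_eq_complex_smul]
      simp only [Pi.add_apply, Pi.smul_apply, smul_eq_mul, add_smul]
      rw [Finset.sum_add_distrib, smul_add, smul_add, Finset.smul_sum, Finset.smul_sum]
      have hA1 : a • A + b • A = A := by rw [← add_smul, hab, one_smul]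
      conv_lhs => rw [← hA1]
      simp only [smul_smul]
      abel
    simp only [smul_eq_mul]
    rw [haff]
    exact main_ineq (hpos x hx) (hpos y hy) ha' hb' hab
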